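/- With the notation of the previous setting, suppose θ : M → N is a B-A-bimodule map. Then ∇∇(θ) = ∇_N ∘ θ − (id ⊗ θ) ∘ ∇_M is a right A-module map (hence a bimodule map) if and only if σ_N ∘ (θ ⊗ id) = (id ⊗ θ) ∘ σ_M as maps M ⊗_A Ω¹_A → Ω¹_B ⊗_B N. -/

import Mathlib

/-- For a B-A-bimodule map θ : M → N between bimodules with left
bimodule connections, ∇∇(θ) = ∇_N ∘ θ − (id⊗θ) ∘ ∇_M is a right A-module map
(hence a bimodule map) if and only if σ_N ∘ (θ⊗id) = (id⊗θ) ∘ σ_M as maps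
M ⊗_A Ω¹_A → Ω¹_B ⊗_B N.  Here MΩA, NΩA stand for M ⊗_A Ω¹_A, N ⊗_A Ω¹_A and
ΩBM, ΩBN for Ω¹_B ⊗_B M, Ω¹_B ⊗_B N; `θι` is θ ⊗ id and `idθ` is id ⊗ θ. -/
theorem stmt1
    (B A ΩB ΩA M N ΩBM ΩBN MΩA NΩA : Type)
    [Ring B] [Ring A] [Algebra ℂ B] [Algebra ℂ A]
    [AddCommGroup ΩB] [AddCommGroup ΩA] [AddCommGroup M] [AddCommGroup N]
    [AddCommGroup ΩBM] [AddCommGroup ΩBN] [AddCommGroup MΩA] [AddCommGroup NΩA]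
    (dB : B → ΩB) (dA : A → ΩA)
    -- module actions
    (smulBM : B → M → M) (ractMA : M → A → M)
    (smulBN : B → N → N) (ractNA : N → A → N)
    (smulBBM : B → ΩBM → ΩBM) (ractBMA : ΩBM → A → ΩBM)
    (smulBBN : B → ΩBN → ΩBN) (ractBNA : ΩBN → A → ΩBN)
    -- tensoring maps
    (tensM : ΩB → M → ΩBM) (tensN : ΩB → N → ΩBN)
    (tensMA : M → ΩA → MΩA) (tensNA : N → ΩA → NΩA)
    -- bimodule connection data
    (nablaM : M → ΩBM) (nablaN : N → ΩBN)
    (σM : MΩA →+ ΩBM) (σN : NΩA →+ ΩBN)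
    (hLeibM : ∀ b m, nablaM (smulBM b m) = tensM (dB b) m + smulBBM b (nablaM m))
    (hLeibN : ∀ b n, nablaN (smulBN b n) = tensN (dB b) n + smulBBN b (nablaN n))
    (hσM : ∀ m a, nablaM (ractMA m a) = ractBMA (nablaM m) a + σM (tensMA m (dA a)))
    (hσN : ∀ n a, nablaN (ractNA n a) = ractBNA (nablaN n) a + σN (tensNA n (dA a)))
    -- θ is a B-A-bimodule map
    (θ : M →+ N) (idθ : ΩBM →+ ΩBN) (θι : MΩA →+ NΩA)
    (hθl : ∀ b m, θ (smulBM b m) = smulBN b (θ m))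
    (hθr : ∀ m a, θ (ractMA m a) = ractNA (θ m) a)
    (hidθ : ∀ ω m, idθ (tensM ω m) = tensN ω (θ m))
    (hidθr : ∀ x a, idθ (ractBMA x a) = ractBNA (idθ x) a)
    (hθι : ∀ m ξ, θι (tensMA m ξ) = tensNA (θ m) ξ)
    -- right actions are additive
    (hractBNAadd : ∀ x y a, ractBNA (x + y) a = ractBNA x a + ractBNA y a)
    (hractBNAneg : ∀ x a, ractBNA (-x) a = -(ractBNA x a))
    -- balanced tensor: m ⊗ a·ξ = m·a ⊗ ξ (left ΩA-action via A)
    (lA : A → ΩA → ΩA)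
    (hbal : ∀ m a ξ, tensMA m (lA a ξ) = tensMA (ractMA m a) ξ)
    -- surjectivity of the calculus: M ⊗_A Ω¹_A is generated by elements m ⊗ da
    (hgen : AddSubgroup.closure {x : MΩA | ∃ m a, x = tensMA m (dA a)} = ⊤) :
    -- conclusion: ∇∇(θ) is a right A-module map iff σ_N ∘ (θ⊗id) = (id⊗θ) ∘ σ_M
    ((∀ m a,
        nablaN (θ (ractMA m a)) - idθ (nablaM (ractMA m a))
          = ractBNA (nablaN (θ m) - idθ (nablaM m)) a)
      ↔ (∀ x : MΩA, σN (θι x) = idθ (σM x))) := by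
  constructor
  · intro h
    have key : ∀ m a, σN (θι (tensMA m (dA a))) = idθ (σM (tensMA m (dA a))) := by
      intro m a
      have h1 := h m a
      rw [hθr m a, hσN, hσM, map_add, hidθr, sub_eq_add_neg (nablaN (θ m)) _,
        hractBNAadd, hractBNAneg] at h1
      have h2 : σN (tensNA (θ m) (dA a)) - idθ (σM (tensMA m (dA a)))
          = (ractBNA (nablaN (θ m)) a + σN (tensNA (θ m) (dA a))
              - (ractBNA (idθ (nablaM m)) a + idθ (σM (tensMA m (dA a)))))
            - (ractBNA (nablaN (θ m)) a + -ractBNA (idθ (nablaM m)) a) := by abel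
      rw [h1, sub_self] at h2
      rw [hθι]
      exact sub_eq_zero.mp h2
    intro x
    have hx : x ∈ AddSubgroup.closure {x : MΩA | ∃ m a, x = tensMA m (dA a)} := by
      rw [hgen]; exact AddSubgroup.mem_top x
    induction hx using AddSubgroup.closure_induction with
    | mem y hy => obtain ⟨m, a, rfl⟩ := hy; exact key m a
    | zero => simp
    | add y z _ _ hy hz => simp [hy, hz]
    | neg y _ hy => simp [hy]
  · intro h m a
    rw [hθr m a, hσN, hσM, map_add, hidθr, sub_eq_add_neg (nablaN (θ m)) _,
      hractBNAadd, hractBNAneg]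
    have := h (tensMA m (dA a))
    rw [hθι] at this
    rw [this]
    abel
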